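/- For any probability measures P and P' on A, any probability measure Q on Â, any D ≥ 0 and any ε ∈ (0,1): R₁(εP' + (1−ε)P, Q, D) ≥ ε R₁(P', Q, D/ε). Consequently, for any family {Q_θ : θ ∈ Θ}, R₁^Θ(εP' + (1−ε)P, D) ≥ ε R₁^Θ(P', D/ε). -/

import Mathlib

open MeasureTheory ProbabilityTheory Filter Topology Set
open scoped ENNReal NNReal

noncomputable section

open scoped Classical in
/-- Relative entropy `H(μ‖ν)`, with values in `ℝ≥0∞` and the convention that it is `∞`
unless `μ ≪ ν` and the log-likelihood ratio is integrable. -/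
def relEnt {X : Type*} [MeasurableSpace X] (μ ν : Measure X) : ℝ≥0∞ :=
  if μ ≪ ν ∧ Integrable (llr μ ν) μ then ENNReal.ofReal (∫ x, llr μ ν x ∂μ) else ⊤

/-- The set `W(P,D)` of couplings with first marginal `P` and expected distortion at most `D`. -/
def Wset {A B : Type*} [MeasurableSpace A] [MeasurableSpace B]
    (ρ : A → B → ℝ) (P : Measure A) (D : ℝ) : Set (Measure (A × B)) :=
  {W | IsProbabilityMeasure W ∧ W.fst = P ∧
    ∫⁻ p, ENNReal.ofReal (ρ p.1 p.2) ∂W ≤ ENNReal.ofReal D}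

/-- `R₁(P,Q,D) := inf_{W ∈ W(P,D)} H(W ‖ P × Q)`, with `inf ∅ = ∞`. -/
def RQ {A B : Type*} [MeasurableSpace A] [MeasurableSpace B]
    (ρ : A → B → ℝ) (P : Measure A) (Q : Measure B) (D : ℝ) : ℝ≥0∞ :=
  ⨅ W ∈ Wset ρ P D, relEnt W (P.prod Q)

/-- `R₁^Θ(P,D) := inf_θ R₁(P,Q_θ,D)`. -/
def RTh {A B Θ : Type*} [MeasurableSpace A] [MeasurableSpace B]
    (ρ : A → B → ℝ) (Q : Θ → Measure B) (P : Measure A) (D : ℝ) : ℝ≥0∞ :=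
  ⨅ θ : Θ, RQ ρ P (Q θ) D

/-- The (first-order) rate-distortion function
`R₁(P,D) := inf_{W ∈ W(P,D)} H(W ‖ W^A × W^Â)`, with `inf ∅ = ∞`. -/
def Rnp {A B : Type*} [MeasurableSpace A] [MeasurableSpace B]
    (ρ : A → B → ℝ) (P : Measure A) (D : ℝ) : ℝ≥0∞ :=
  ⨅ W ∈ Wset ρ P D, relEnt W (W.fst.prod W.snd)

/-- The empirical distribution of `(x 0, …, x (n-1))`. -/
def empMeas {A : Type*} [MeasurableSpace A] (x : ℕ → A) (n : ℕ) : Measure A :=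
  (n : ℝ≥0∞)⁻¹ • ∑ k ∈ Finset.range n, Measure.dirac (x k)

/-- The shift map on sequences. -/
def shift {A : Type*} : (ℕ → A) → (ℕ → A) := fun x n => x (n + 1)

/-- `D_c^Θ(P)`: the set of distortion levels where `D ↦ R₁^Θ(P,D)` is continuous from the
left (the left limit being the infimum over `λ ∈ (0,1)` of `R₁^Θ(P,λD)`, by monotonicity),
with the conventions that `0 ∈ D_c^Θ(P)` and that `D ∈ D_c^Θ(P)` whenever `R₁^Θ(P,D) = ∞`. -/
def DcTh {A B Θ : Type*} [MeasurableSpace A] [MeasurableSpace B]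
    (ρ : A → B → ℝ) (Q : Θ → Measure B) (P : Measure A) : Set ℝ :=
  {D | 0 ≤ D ∧ (D = 0 ∨ RTh ρ Q P D = ⊤ ∨
    RTh ρ Q P D = ⨅ l ∈ Set.Ioo (0:ℝ) 1, RTh ρ Q P (l * D))}

/-- `D_c(P)` for the rate-distortion function. -/
def DcNp {A B : Type*} [MeasurableSpace A] [MeasurableSpace B]
    (ρ : A → B → ℝ) (P : Measure A) : Set ℝ :=
  {D | 0 ≤ D ∧ (D = 0 ∨ Rnp ρ P D = ⊤ ∨
    Rnp ρ P D = ⨅ l ∈ Set.Ioo (0:ℝ) 1, Rnp ρ P (l * D))}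

/-- `D_c(P,Q)` for `R₁(P,Q,·)`. -/
def DcQ {A B : Type*} [MeasurableSpace A] [MeasurableSpace B]
    (ρ : A → B → ℝ) (P : Measure A) (Q : Measure B) : Set ℝ :=
  {D | 0 ≤ D ∧ (D = 0 ∨ RQ ρ P Q D = ⊤ ∨
    RQ ρ P Q D = ⨅ l ∈ Set.Ioo (0:ℝ) 1, RQ ρ P Q (l * D))}

/-- The union of distortion balls of radius `M` centered at points of `K`. -/
def Bset {A B : Type*} (ρ : A → B → ℝ) (K : Set A) (M : ℝ) : Set B :=
  {y | ∃ x ∈ K, ρ x y ≤ M}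


/-- Nonnegativity of relative entropy (Gibbs' inequality), via Jensen. -/
lemma my_kl_nonneg {X : Type*} [MeasurableSpace X] (μ ν : Measure X)
    [IsProbabilityMeasure μ] [IsProbabilityMeasure ν]
    (hμν : μ ≪ ν) (h : Integrable (llr μ ν) μ) : 0 ≤ ∫ x, llr μ ν x ∂μ := by
  haveI : NeZero μ := ⟨IsProbabilityMeasure.ne_zero μ⟩
  have hint : Integrable (fun x => Real.exp (- llr μ ν x)) μ :=
    (Measure.integrable_toReal_rnDeriv (μ := ν) (ν := μ)).congr (exp_neg_llr hμν).symm
  have h1 : ∫ x, Real.exp (- llr μ ν x) ∂μ ≤ 1 := by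
    rw [integral_congr_ae (exp_neg_llr hμν)]
    calc ∫ x, (ν.rnDeriv μ x).toReal ∂μ ≤ (ν Set.univ).toReal := by
          have := Measure.setIntegral_toReal_rnDeriv_le (μ := ν) (ν := μ)
            (s := Set.univ) (measure_ne_top ν _)
          simpa using this
      _ = 1 := by simp
  have h2 : Real.exp (∫ x, - llr μ ν x ∂μ) ≤ ∫ x, Real.exp (- llr μ ν x) ∂μ := by
    have := convexOn_exp.map_average_le Real.continuous_exp.continuousOn isClosed_univ
      (ae_of_all μ fun x => Set.mem_univ (- llr μ ν x)) h.neg (by exact hint)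
    simpa [average_eq_integral] using this
  have h3 := h2.trans h1
  rw [integral_neg] at h3
  have h4 : Real.exp (- ∫ x, llr μ ν x ∂μ) ≤ Real.exp 0 := by simpa using h3
  linarith [Real.exp_le_exp.mp h4]

lemma my_compProd_withDensity {A B : Type*} [MeasurableSpace A] [MeasurableSpace B]
    (μ ν : Measure A) [IsFiniteMeasure μ] [IsFiniteMeasure ν] (hμν : μ ≪ ν)
    (Q : Measure B) [IsFiniteMeasure Q] (κ : Kernel A B) [IsMarkovKernel κ]
    {g : A × B → ℝ≥0∞} (hg : Measurable g)
    (hW : ν ⊗ₘ κ = (ν.prod Q).withDensity g) :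
    μ ⊗ₘ κ = (μ.prod Q).withDensity g := by
  ext s hs
  have hWD : ∀ (m : Measure A), SFinite m →
      (m.prod Q).withDensity g s = ∫⁻ x, ∫⁻ y, s.indicator g (x, y) ∂Q ∂m := by
    intro m _
    rw [withDensity_apply _ hs, ← lintegral_indicator hs,
      lintegral_prod _ (hg.indicator hs).aemeasurable]
  have hFmeas : Measurable fun x => ∫⁻ y, s.indicator g (x, y) ∂Q :=
    (hg.indicator hs).lintegral_prod_right'
  have hκmeas : Measurable fun x => κ x (Prod.mk x ⁻¹' s) :=
    Kernel.measurable_kernel_prodMk_left hs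
  have hae : (fun x => κ x (Prod.mk x ⁻¹' s)) =ᵐ[ν]
      fun x => ∫⁻ y, s.indicator g (x, y) ∂Q := by
    refine ae_eq_of_forall_setLIntegral_eq_of_sigmaFinite₀ hκmeas.aemeasurable
      hFmeas.aemeasurable fun u hu _ => ?_
    have hsu : MeasurableSet (s ∩ u ×ˢ Set.univ) := hs.inter (hu.prod MeasurableSet.univ)
    have h1 : (ν ⊗ₘ κ) (s ∩ u ×ˢ Set.univ) = ∫⁻ x in u, κ x (Prod.mk x ⁻¹' s) ∂ν := by
      rw [Measure.compProd_apply hsu, ← lintegral_indicator hu]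
      congr 1
      ext x
      by_cases hx : x ∈ u
      · have hpre : Prod.mk x ⁻¹' (s ∩ u ×ˢ Set.univ) = Prod.mk x ⁻¹' s := by
          ext y; simp [hx]
        simp [Set.indicator_of_mem hx, hpre]
      · have hpre : Prod.mk x ⁻¹' (s ∩ u ×ˢ Set.univ) = (∅ : Set B) := by
          ext y; simp [hx]
        simp [Set.indicator_of_notMem hx, hpre]
    have h2 : (ν.prod Q).withDensity g (s ∩ u ×ˢ Set.univ)
        = ∫⁻ x in u, ∫⁻ y, s.indicator g (x, y) ∂Q ∂ν := by
      rw [withDensity_apply _ hsu, ← lintegral_indicator hsu,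
        lintegral_prod _ (hg.indicator hsu).aemeasurable, ← lintegral_indicator hu]
      congr 1
      ext x
      by_cases hx : x ∈ u
      · rw [Set.indicator_of_mem hx]
        congr 1
        ext y
        by_cases hxy : (x, y) ∈ s <;> simp [Set.indicator, hxy, hx]
      · rw [Set.indicator_of_notMem hx]
        have hz : ∀ y, (s ∩ u ×ˢ Set.univ).indicator g (x, y) = 0 := fun y => by
          simp [Set.indicator, hx]
        simp [hz]
    rw [← h1, hW, h2]
  rw [Measure.compProd_apply hs, hWD μ inferInstance,
    lintegral_congr_ae (hae.filter_mono hμν.ae_le)]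

lemma my_main {A B : Type*} [MeasurableSpace A] [MeasurableSpace B]
    [StandardBorelSpace B]
    (ρ : A → B → ℝ)
    (P P' : Measure A) [IsProbabilityMeasure P] [IsProbabilityMeasure P']
    (Qm : Measure B) [IsProbabilityMeasure Qm]
    (D : ℝ) (ε : ℝ) (hε : ε ∈ Set.Ioo (0:ℝ) 1) :
    ENNReal.ofReal ε * RQ ρ P' Qm (D / ε)
      ≤ RQ ρ (ENNReal.ofReal ε • P' + ENNReal.ofReal (1 - ε) • P) Qm D := by
  obtain ⟨hε0, hε1⟩ := hε
  set ε' := ENNReal.ofReal ε with hε'def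
  set δ' := ENNReal.ofReal (1 - ε) with hδ'def
  have hε'0 : ε' ≠ 0 := (ENNReal.ofReal_pos.mpr hε0).ne'
  have hδ'0 : δ' ≠ 0 := (ENNReal.ofReal_pos.mpr (by linarith)).ne'
  have hε'top : ε' ≠ ⊤ := ENNReal.ofReal_ne_top
  have hδ'top : δ' ≠ ⊤ := ENNReal.ofReal_ne_top
  set Pt := ε' • P' + δ' • P with hPtdef
  haveI hPtprob : IsProbabilityMeasure Pt := by
    constructor
    rw [hPtdef]
    simp only [Measure.coe_add, Pi.add_apply, Measure.smul_apply, smul_eq_mul, measure_univ,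
      mul_one]
    rw [hε'def, hδ'def, ← ENNReal.ofReal_add hε0.le (by linarith)]
    norm_num
  have hP'ac : P' ≪ Pt := by
    refine Measure.AbsolutelyContinuous.mk fun s hs h0 => ?_
    have h1 : ε' * P' s ≤ Pt s := by
      rw [hPtdef]
      simp only [Measure.coe_add, Pi.add_apply, Measure.smul_apply, smul_eq_mul]
      exact le_self_add
    rw [h0] at h1
    rcases mul_eq_zero.mp (le_antisymm h1 zero_le) with h | h
    · exact absurd h hε'0
    · exact h
  have hPac : P ≪ Pt := by
    refine Measure.AbsolutelyContinuous.mk fun s hs h0 => ?_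
    have h1 : δ' * P s ≤ Pt s := by
      rw [hPtdef]
      simp only [Measure.coe_add, Pi.add_apply, Measure.smul_apply, smul_eq_mul]
      exact le_add_self
    rw [h0] at h1
    rcases mul_eq_zero.mp (le_antisymm h1 zero_le) with h | h
    · exact absurd h hδ'0
    · exact h
  haveI : Nonempty B := by
    rcases isEmpty_or_nonempty B with hB | hB
    · exfalso
      have h := measure_univ (μ := Qm)
      rw [Set.univ_eq_empty_iff.mpr hB] at h
      simp at h
    · exact hB
  rw [RQ]
  refine le_iInf₂ fun W hW => ?_
  obtain ⟨hWprob, hWfst, hWdist⟩ := hW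
  haveI := hWprob
  by_cases hfin : W ≪ Pt.prod Qm ∧ Integrable (llr W (Pt.prod Qm)) W
  swap
  · rw [relEnt, if_neg hfin]; exact le_top
  obtain ⟨hac, hint⟩ := hfin
  set κ := W.condKernel with hκdef
  have hdis : Pt ⊗ₘ κ = W := by
    rw [hκdef, ← hWfst]
    exact Measure.disintegrate _ _
  set g := W.rnDeriv (Pt.prod Qm) with hgdef
  have hgmeas : Measurable g := Measure.measurable_rnDeriv _ _
  have hWg : Pt ⊗ₘ κ = (Pt.prod Qm).withDensity g := by
    rw [hdis, Measure.withDensity_rnDeriv_eq _ _ hac]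
  have hW' : P' ⊗ₘ κ = (P'.prod Qm).withDensity g :=
    my_compProd_withDensity P' Pt hP'ac Qm κ hgmeas hWg
  have hW'' : P ⊗ₘ κ = (P.prod Qm).withDensity g :=
    my_compProd_withDensity P Pt hPac Qm κ hgmeas hWg
  set W' := P' ⊗ₘ κ with hW'def
  set W'' := P ⊗ₘ κ with hW''def
  haveI hW'prob : IsProbabilityMeasure W' := by rw [hW'def]; infer_instance
  haveI hW''prob : IsProbabilityMeasure W'' := by rw [hW''def]; infer_instance
  have hdecomp : W = ε' • W' + δ' • W'' := by
    rw [← hdis, hPtdef, Measure.compProd_add_left, Measure.compProd_smul_left,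
      Measure.compProd_smul_left]
  have hac' : W' ≪ P'.prod Qm := hW' ▸ withDensity_absolutelyContinuous _ _
  have hac'' : W'' ≪ P.prod Qm := hW'' ▸ withDensity_absolutelyContinuous _ _
  set L := llr W (Pt.prod Qm) with hLdef
  have hllr' : llr W' (P'.prod Qm) =ᵐ[W'] L := by
    have h1 : W'.rnDeriv (P'.prod Qm) =ᵐ[P'.prod Qm] g := by
      rw [hW']; exact Measure.rnDeriv_withDensity _ hgmeas
    filter_upwards [hac'.ae_le h1] with p hp
    rw [hLdef]
    simp only [llr]
    rw [hp, hgdef]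
  have hllr'' : llr W'' (P.prod Qm) =ᵐ[W''] L := by
    have h1 : W''.rnDeriv (P.prod Qm) =ᵐ[P.prod Qm] g := by
      rw [hW'']; exact Measure.rnDeriv_withDensity _ hgmeas
    filter_upwards [hac''.ae_le h1] with p hp
    rw [hLdef]
    simp only [llr]
    rw [hp, hgdef]
  have hintW : Integrable L W := hint
  rw [hdecomp] at hintW
  have hint' : Integrable L W' :=
    (integrable_smul_measure hε'0 hε'top).mp (integrable_add_measure.mp hintW).1
  have hint'' : Integrable L W'' :=
    (integrable_smul_measure hδ'0 hδ'top).mp (integrable_add_measure.mp hintW).2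
  have hllrint' : Integrable (llr W' (P'.prod Qm)) W' := hint'.congr hllr'.symm
  have hllrint'' : Integrable (llr W'' (P.prod Qm)) W'' := hint''.congr hllr''.symm
  have hnn : 0 ≤ ∫ p, L p ∂W'' := by
    rw [← integral_congr_ae hllr'']
    exact my_kl_nonneg W'' (P.prod Qm) hac'' hllrint''
  have hsplit : ∫ p, L p ∂W = ε * ∫ p, L p ∂W' + (1 - ε) * ∫ p, L p ∂W'' := by
    rw [hdecomp, integral_add_measure ((integrable_smul_measure hε'0 hε'top).mpr hint')
      ((integrable_smul_measure hδ'0 hδ'top).mpr hint''), integral_smul_measure,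
      integral_smul_measure, hε'def, hδ'def, ENNReal.toReal_ofReal hε0.le,
      ENNReal.toReal_ofReal (by linarith : (0:ℝ) ≤ 1 - ε), smul_eq_mul, smul_eq_mul]
  have hdist' : ∫⁻ p, ENNReal.ofReal (ρ p.1 p.2) ∂W' ≤ ENNReal.ofReal (D / ε) := by
    have h1 : ε' * ∫⁻ p, ENNReal.ofReal (ρ p.1 p.2) ∂W' ≤ ENNReal.ofReal D := by
      refine le_trans ?_ hWdist
      rw [hdecomp, lintegral_add_measure, lintegral_smul_measure, lintegral_smul_measure]
      exact le_self_add
    rw [ENNReal.ofReal_div_of_pos hε0, ENNReal.le_div_iff_mul_le (Or.inl hε'0) (Or.inl hε'top),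
      mul_comm]
    exact h1
  have hmem : W' ∈ Wset ρ P' (D / ε) := ⟨hW'prob, by rw [hW'def]; exact Measure.fst_compProd P' κ, hdist'⟩
  have hRQle : RQ ρ P' Qm (D / ε) ≤ relEnt W' (P'.prod Qm) := by
    rw [RQ]
    exact iInf₂_le W' hmem
  calc ε' * RQ ρ P' Qm (D / ε) ≤ ε' * relEnt W' (P'.prod Qm) := mul_le_mul_right hRQle ε'
    _ ≤ relEnt W (Pt.prod Qm) := by
        rw [relEnt, if_pos ⟨hac', hllrint'⟩, relEnt, if_pos ⟨hac, hint⟩]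
        rw [integral_congr_ae hllr', hε'def, ← ENNReal.ofReal_mul hε0.le]
        refine ENNReal.ofReal_le_ofReal ?_
        have : ∫ p, llr W (Pt.prod Qm) p ∂W = ∫ p, L p ∂W := by rw [hLdef]
        rw [this, hsplit]
        nlinarith [hnn, mul_nonneg (by linarith : (0:ℝ) ≤ 1 - ε) hnn]

/-- Mixture inequality: for `ε ∈ (0,1)`,
`R₁(εP' + (1-ε)P, Q, D) ≥ ε R₁(P', Q, D/ε)`, and consequently
`R₁^Θ(εP' + (1-ε)P, D) ≥ ε R₁^Θ(P', D/ε)`. -/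
theorem mixture_inequality
    {A B Θ : Type*} [MeasurableSpace A] [MeasurableSpace B]
    [StandardBorelSpace A] [StandardBorelSpace B]
    (ρ : A → B → ℝ) (hρmeas : Measurable (Function.uncurry ρ))
    (hρnn : ∀ x y, 0 ≤ ρ x y)
    (P P' : Measure A) [IsProbabilityMeasure P] [IsProbabilityMeasure P']
    (Qm : Measure B) [IsProbabilityMeasure Qm]
    (Q : Θ → Measure B) (hQ : ∀ θ, IsProbabilityMeasure (Q θ))
    (D : ℝ) (hD : 0 ≤ D) (ε : ℝ) (hε : ε ∈ Set.Ioo (0:ℝ) 1) :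
    ENNReal.ofReal ε * RQ ρ P' Qm (D / ε)
        ≤ RQ ρ (ENNReal.ofReal ε • P' + ENNReal.ofReal (1 - ε) • P) Qm D
    ∧ ENNReal.ofReal ε * RTh ρ Q P' (D / ε)
        ≤ RTh ρ Q (ENNReal.ofReal ε • P' + ENNReal.ofReal (1 - ε) • P) D := by
  refine ⟨my_main ρ P P' Qm D ε hε, ?_⟩
  simp only [RTh]
  refine le_iInf fun θ => ?_
  haveI := hQ θ
  calc ENNReal.ofReal ε * ⨅ θ', RQ ρ P' (Q θ') (D / ε)
      ≤ ENNReal.ofReal ε * RQ ρ P' (Q θ) (D / ε) := mul_le_mul_right (iInf_le _ θ) _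
    _ ≤ _ := my_main ρ P P' (Q θ) D ε hε
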